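/- Let α be an algebraic number of degree at most D and let α_1, ..., α_N be algebraic integers of degree at most d with α ≠ α(N) := [0; α_1, ..., α_N] and α not conjugate to α(N). Then |α − α(N)| · (2^{2N−1} H(α) ∏_{n=1}^N house(α_n))^{D d^N} ≥ 1. -/

import Mathlib

open Polynomial Filter

/-- The multiset of conjugates (in ℂ) of a complex number: the roots of its
minimal polynomial over ℚ. -/
noncomputable def conjugates (α : ℂ) : Multiset ℂ :=
  ((minpoly ℚ α).map (algebraMap ℚ ℂ)).roots

/-- The house of an algebraic number: the maximum modulus of its conjugates. -/
noncomputable def house (α : ℂ) : ℝ :=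
  (((conjugates α).map (fun z => ‖z‖₊)).sup : NNReal)

/-- The primitive integer minimal polynomial of an algebraic number. -/
noncomputable def intMinPoly (α : ℂ) : Polynomial ℤ :=
  (IsLocalization.integerNormalization (nonZeroDivisors ℤ) (minpoly ℚ α)).primPart

/-- The Mahler measure of an algebraic number. -/
noncomputable def mahlerM (α : ℂ) : ℝ :=
  ((|(intMinPoly α).leadingCoeff| : ℤ) : ℝ) *
    ((((intMinPoly α).map (algebraMap ℤ ℂ)).roots).map (fun z => max 1 (‖z‖))).prod

/-- The multiplicative Weil height of an algebraic number. -/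
noncomputable def weilHeight (α : ℂ) : ℝ :=
  mahlerM α ^ ((1 : ℝ) / (minpoly ℚ α).natDegree)

/-- Value of the finite continued fraction [0; a_1, ..., a_N]. -/
noncomputable def cfVal {K : Type*} [DivisionRing K] : List K → K
  | [] => 0
  | a :: l => 1 / (a + cfVal l)

/-- The N-th convergent [0; a 1, ..., a N] of the continued fraction with partial
quotients a 1, a 2, .... -/
noncomputable def cfConv {K : Type*} [DivisionRing K] (a : ℕ → K) (N : ℕ) : K :=
  cfVal ((List.range N).map fun i => a (i + 1))

-- c1


/-- numerator/denominator pair of a continued fraction -/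
def cfPQ {A : Type*} [CommRing A] : List A → A × A
  | [] => (0, 1)
  | a :: t => ((cfPQ t).2, a * (cfPQ t).2 + (cfPQ t).1)

lemma cfPQ_map {A B : Type*} [CommRing A] [CommRing B] (f : A →+* B) (l : List A) :
    cfPQ (l.map f) = ((f (cfPQ l).1), f (cfPQ l).2) := by
  induction l with
  | nil => simp [cfPQ]
  | cons a t ih => simp [cfPQ, ih]

lemma cfPQ_integral {A : Type*} [CommRing A] (l : List A) (h : ∀ x ∈ l, IsIntegral ℤ x) :
    IsIntegral ℤ (cfPQ l).1 ∧ IsIntegral ℤ (cfPQ l).2 := by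
  induction l with
  | nil => exact ⟨isIntegral_zero, isIntegral_one⟩
  | cons a t ih =>
      obtain ⟨h1, h2⟩ := ih (fun x hx => h x (List.mem_cons_of_mem a hx))
      exact ⟨h2, ((h a (List.mem_cons_self)).mul h2).add h1⟩

lemma cfVal_eq {K : Type*} [Field K] (l : List K)
    (h2 : ∀ t ∈ l.tails, t ≠ [] → cfVal t ≠ 0) :
    (cfPQ l).2 ≠ 0 ∧ cfVal l = (cfPQ l).1 / (cfPQ l).2 := by
  induction l with
  | nil => simp [cfPQ, cfVal]
  | cons a t ih =>
      have ht : ∀ t' ∈ t.tails, t' ≠ [] → cfVal t' ≠ 0 := by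
        intro t' ht' h
        exact h2 t' (by rw [List.tails_cons]; exact List.mem_cons_of_mem _ ht') h
      obtain ⟨hq, hv⟩ := ih ht
      have hself : cfVal (a :: t) ≠ 0 := by
        refine h2 (a :: t) ?_ (by simp)
        rw [List.tails_cons]; exact List.mem_cons_self
      have hden : a + cfVal t ≠ 0 := by
        intro h0
        apply hself
        simp [cfVal, h0]
      have hden' : a * (cfPQ t).2 + (cfPQ t).1 ≠ 0 := by
        intro h0
        apply hden
        have : (a + cfVal t) * (cfPQ t).2 = 0 := by
          rw [hv]; field_simp; linear_combination h0
        rcases mul_eq_zero.1 this with h | h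
        · exact h
        · exact absurd h hq
      constructor
      · simpa [cfPQ] using hden'
      · show 1 / (a + cfVal t) = _
        rw [hv]
        have hden2 : a + (cfPQ t).1 / (cfPQ t).2 ≠ 0 := by rw [← hv]; exact hden
        show _ = (cfPQ t).2 / (a * (cfPQ t).2 + (cfPQ t).1)
        rw [div_eq_div_iff hden2 hden']
        field_simp

lemma one_le_maxProd (l : List ℂ) : 1 ≤ (l.map (fun x => max 1 (‖x‖))).prod := by
  induction l with
  | nil => simp
  | cons a t ih =>
      simp only [List.map_cons, List.prod_cons]
      nlinarith [le_max_left 1 (‖a‖)]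

lemma cfPQ_bound (l : List ℂ) :
    ‖(cfPQ l).1‖ ≤ 2 ^ (l.length - 1) * (l.map (fun x => max 1 (‖x‖))).prod ∧
    ‖(cfPQ l).2‖ ≤ 2 ^ (l.length - 1) * (l.map (fun x => max 1 (‖x‖))).prod := by
  induction l with
  | nil => simp [cfPQ]
  | cons a t ih =>
      obtain ⟨hp, hq⟩ := ih
      have hQ1 : (1:ℝ) ≤ (t.map (fun x => max 1 (‖x‖))).prod := one_le_maxProd t
      have ha1 : (1:ℝ) ≤ max 1 (‖a‖) := le_max_left _ _
      have haa : ‖a‖ ≤ max 1 (‖a‖) := le_max_right _ _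
      have hP' : (0:ℝ) < 2 ^ (t.length + 1 - 1) := pow_pos (by norm_num) _
      have hmono : (2:ℝ) ^ (t.length - 1) ≤ 2 ^ (t.length + 1 - 1) := by
        apply pow_le_pow_right₀ (by norm_num); omega
      simp only [List.map_cons, List.prod_cons, List.length_cons]
      constructor
      · show ‖(cfPQ t).2‖ ≤ _
        calc ‖(cfPQ t).2‖
            ≤ 2 ^ (t.length - 1) * (t.map (fun x => max 1 (‖x‖))).prod := hq
        _ ≤ 2 ^ (t.length + 1 - 1) * (t.map (fun x => max 1 (‖x‖))).prod :=
            mul_le_mul_of_nonneg_right hmono (by linarith)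
        _ ≤ 2 ^ (t.length + 1 - 1) * (max 1 (‖a‖) * (t.map (fun x => max 1 (‖x‖))).prod) :=
            mul_le_mul_of_nonneg_left (le_mul_of_one_le_left (by linarith) ha1) (le_of_lt hP')
      · by_cases ht0 : t = []
        · subst ht0
          show ‖a * (cfPQ ([]:List ℂ)).2 + (cfPQ ([]:List ℂ)).1‖ ≤ _
          simp only [cfPQ, mul_one, add_zero, List.length_nil, List.map_nil, List.prod_nil]
          calc ‖a‖ ≤ max 1 (‖a‖) := haa
          _ ≤ 2 ^ (0 + 1 - 1) * (1 ⊔ ‖a‖) := by norm_num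
        · have hlen : 1 ≤ t.length := List.length_pos_iff.2 ht0
          have h2' : (2:ℝ) * 2 ^ (t.length - 1) = 2 ^ (t.length + 1 - 1) := by
            rw [← pow_succ']; congr 1; omega
          show ‖a * (cfPQ t).2 + (cfPQ t).1‖ ≤ _
          calc ‖a * (cfPQ t).2 + (cfPQ t).1‖
              ≤ ‖a‖ * ‖(cfPQ t).2‖ + ‖(cfPQ t).1‖ := by
                refine (norm_add_le _ _).trans ?_; rw [norm_mul]
          _ ≤ max 1 (‖a‖) * (‖(cfPQ t).2‖ + ‖(cfPQ t).1‖) := by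
                nlinarith [norm_nonneg (cfPQ t).2, norm_nonneg (cfPQ t).1, norm_nonneg a]
          _ ≤ max 1 (‖a‖) * (2 * (2 ^ (t.length - 1) * (t.map (fun x => max 1 (‖x‖))).prod)) := by
                nlinarith
          _ = 2 ^ (t.length + 1 - 1) * (max 1 (‖a‖) * (t.map (fun x => max 1 (‖x‖))).prod) := by
                rw [← h2']; ring


lemma intMinPoly_map_ratio {x : ℂ} (hx : IsAlgebraic ℚ x) :
    ∃ u : ℚ, u ≠ 0 ∧ (intMinPoly x).map (algebraMap ℤ ℚ) = Polynomial.C u * minpoly ℚ x := by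
  obtain ⟨b, hb⟩ := IsLocalization.integerNormalization_map_to_map
    (nonZeroDivisors ℤ) (minpoly ℚ x)
  set P := IsLocalization.integerNormalization (nonZeroDivisors ℤ) (minpoly ℚ x) with hPdef
  have hP0 : P ≠ 0 := by
    rw [hPdef, Ne, IsFractionRing.integerNormalization_eq_zero_iff]
    exact minpoly.ne_zero hx.isIntegral
  have hcont : P.content ≠ 0 := by rw [Ne, content_eq_zero_iff]; exact hP0
  have hcontQ : ((P.content : ℤ) : ℚ) ≠ 0 := Int.cast_ne_zero.2 hcont
  have hbne : ((b : ℤ) : ℚ) ≠ 0 :=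
    Int.cast_ne_zero.2 (nonZeroDivisors.coe_ne_zero b)
  refine ⟨((b : ℤ) : ℚ) / ((P.content : ℤ) : ℚ), div_ne_zero hbne hcontQ, ?_⟩
  have hmapP : P.map (algebraMap ℤ ℚ) = Polynomial.C ((b : ℤ) : ℚ) * minpoly ℚ x := by
    rw [hb]
    rw [show ((b : ℤ) • minpoly ℚ x) = (((b : ℤ) : ℚ)) • minpoly ℚ x from
      (Int.cast_smul_eq_zsmul ℚ (b : ℤ) (minpoly ℚ x)).symm]
    rw [Polynomial.smul_eq_C_mul]
  have hsplit : P.map (algebraMap ℤ ℚ) =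
      Polynomial.C ((P.content : ℤ) : ℚ) * (intMinPoly x).map (algebraMap ℤ ℚ) := by
    conv_lhs => rw [P.eq_C_content_mul_primPart]
    rw [Polynomial.map_mul, Polynomial.map_C]
    rfl
  apply mul_left_cancel₀ (show Polynomial.C (((P.content : ℤ) : ℚ)) ≠ 0 by
    simpa using hcontQ)
  rw [← hsplit, hmapP, ← mul_assoc, ← Polynomial.C_mul]
  congr 2
  field_simp

lemma intMinPoly_natDegree {x : ℂ} (hx : IsAlgebraic ℚ x) :
    (intMinPoly x).natDegree = (minpoly ℚ x).natDegree := by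
  obtain ⟨u, hu, heq⟩ := intMinPoly_map_ratio hx
  have h1 : ((intMinPoly x).map (algebraMap ℤ ℚ)).natDegree = (intMinPoly x).natDegree :=
    natDegree_map_eq_of_injective (algebraMap ℤ ℚ).injective_int _
  rw [← h1, heq, natDegree_C_mul hu]

lemma intMinPoly_map_C {x : ℂ} (hx : IsAlgebraic ℚ x) :
    ∃ u : ℚ, u ≠ 0 ∧ (intMinPoly x).map (algebraMap ℤ ℂ) =
      Polynomial.C (u : ℂ) * (minpoly ℚ x).map (algebraMap ℚ ℂ) := by
  obtain ⟨u, hu, heq⟩ := intMinPoly_map_ratio hx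
  refine ⟨u, hu, ?_⟩
  have : algebraMap ℤ ℂ = (algebraMap ℚ ℂ).comp (algebraMap ℤ ℚ) := by
    ext n; simp
  rw [this, ← Polynomial.map_map, heq, Polynomial.map_mul, Polynomial.map_C]
  rfl

lemma intMinPoly_roots {x : ℂ} (hx : IsAlgebraic ℚ x) :
    ((intMinPoly x).map (algebraMap ℤ ℂ)).roots = conjugates x := by
  obtain ⟨u, hu, heq⟩ := intMinPoly_map_C hx
  rw [heq, conjugates, roots_C_mul]
  simpa using hu

lemma conjugates_card {x : ℂ} (hx : IsAlgebraic ℚ x) :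
    Multiset.card (conjugates x) = (minpoly ℚ x).natDegree := by
  rw [conjugates]
  have hsplit : ((minpoly ℚ x).map (algebraMap ℚ ℂ)).Splits :=
    IsAlgClosed.splits _
  have := (hsplit.natDegree_eq_card_roots).symm
  simpa [natDegree_map] using this

lemma mem_conjugates_self {x : ℂ} (hx : IsAlgebraic ℚ x) : x ∈ conjugates x := by
  have h0 : (minpoly ℚ x).map (algebraMap ℚ ℂ) ≠ 0 :=
    map_ne_zero (minpoly.ne_zero hx.isIntegral)
  rw [conjugates, mem_roots h0, IsRoot, eval_map, ← aeval_def]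
  exact minpoly.aeval ℚ x

lemma intMinPoly_leadingCoeff_ne {x : ℂ} : (intMinPoly x).leadingCoeff ≠ 0 :=
  leadingCoeff_ne_zero.2 (Polynomial.primPart_ne_zero _)

lemma intMinPoly_factor {x : ℂ} (hx : IsAlgebraic ℚ x) :
    (intMinPoly x).map (algebraMap ℤ ℂ) =
      Polynomial.C (((intMinPoly x).leadingCoeff : ℤ) : ℂ) *
        ((conjugates x).map (fun z => X - Polynomial.C z)).prod := by
  set G := (intMinPoly x).map (algebraMap ℤ ℂ) with hG
  have hcard : Multiset.card G.roots = G.natDegree := by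
    have h := (Splits.natDegree_eq_card_roots
      (show G.Splits from IsAlgClosed.splits _)).symm
    simpa using h
  have hlead : G.leadingCoeff = (((intMinPoly x).leadingCoeff : ℤ) : ℂ) := by
    rw [hG, leadingCoeff_map_of_injective (algebraMap ℤ ℂ).injective_int]
    rfl
  rw [← intMinPoly_roots hx, ← hG, ← hlead]
  exact (C_leadingCoeff_mul_prod_multiset_X_sub_C hcard).symm

lemma homog_eval {x : ℂ} (hx : IsAlgebraic ℚ x) (u v : ℂ) (hv : v ≠ 0) :
    ∑ k ∈ Finset.range ((minpoly ℚ x).natDegree + 1),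
        (((intMinPoly x).coeff k : ℤ) : ℂ) * u ^ k * v ^ ((minpoly ℚ x).natDegree - k)
      = (((intMinPoly x).leadingCoeff : ℤ) : ℂ) *
          ((conjugates x).map (fun z => u - z * v)).prod := by
  set r := (minpoly ℚ x).natDegree with hr
  set G := (intMinPoly x).map (algebraMap ℤ ℂ) with hG
  have hGdeg : G.natDegree = r := by
    rw [hG, natDegree_map_eq_of_injective (by exact_mod_cast Int.cast_injective) _,
      intMinPoly_natDegree hx]
  have heval : G.eval (u / v) = ∑ k ∈ Finset.range (r + 1), G.coeff k * (u / v) ^ k := by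
    rw [eval_eq_sum_range, hGdeg]
  have hcoeff : ∀ k, G.coeff k = (((intMinPoly x).coeff k : ℤ) : ℂ) := by
    intro k; rw [hG, coeff_map]; rfl
  have hLHS : v ^ r * G.eval (u / v)
      = ∑ k ∈ Finset.range (r + 1),
          (((intMinPoly x).coeff k : ℤ) : ℂ) * u ^ k * v ^ (r - k) := by
    rw [heval, Finset.mul_sum]
    refine Finset.sum_congr rfl (fun k hk => ?_)
    rw [hcoeff k]
    have hkr : k ≤ r := by have := Finset.mem_range.1 hk; omega
    have hvpow : v ^ r = v ^ k * v ^ (r - k) := by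
      rw [← pow_add]; congr 1; omega
    have hdiv : (u / v) ^ k * v ^ k = u ^ k := by
      rw [div_pow]; field_simp
    calc v ^ r * ((((intMinPoly x).coeff k : ℤ) : ℂ) * (u / v) ^ k)
        = (((intMinPoly x).coeff k : ℤ) : ℂ) * ((u / v) ^ k * v ^ k) * v ^ (r - k) := by
          rw [hvpow]; ring
    _ = _ := by rw [hdiv]
  have hfactor := intMinPoly_factor hx
  have hRHS : G.eval (u / v)
      = (((intMinPoly x).leadingCoeff : ℤ) : ℂ) *
          ((conjugates x).map (fun z => u / v - z)).prod := by
    rw [hG, hfactor, eval_mul, eval_C, eval_multiset_prod]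
    congr 2
    rw [Multiset.map_map]
    congr 1
    funext z
    simp
  have hcardc : Multiset.card (conjugates x) = r := conjugates_card hx
  have hmul : v ^ r * ((conjugates x).map (fun z => u / v - z)).prod
      = ((conjugates x).map (fun z => u - z * v)).prod := by
    have h1 : ((conjugates x).map (fun z => u - z * v)).prod
        = ((conjugates x).map (fun z => v * (u / v - z))).prod := by
      congr 1
      apply Multiset.map_congr rfl
      intro z _
      field_simp
    rw [h1]
    have h2 : ((conjugates x).map (fun z => v * (u / v - z))).prod
        = ((conjugates x).map (fun _ => v)).prod *
            ((conjugates x).map (fun z => u / v - z)).prod := by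
      rw [← Multiset.prod_map_mul]
    rw [h2, Multiset.map_const', Multiset.prod_replicate, hcardc]
  calc ∑ k ∈ Finset.range (r + 1),
        (((intMinPoly x).coeff k : ℤ) : ℂ) * u ^ k * v ^ (r - k)
      = v ^ r * G.eval (u / v) := hLHS.symm
  _ = (((intMinPoly x).leadingCoeff : ℤ) : ℂ) *
        (v ^ r * ((conjugates x).map (fun z => u / v - z)).prod) := by rw [hRHS]; ring
  _ = _ := by rw [hmul]

lemma abs_le_house {x z : ℂ} (hz : z ∈ conjugates x) : ‖z‖ ≤ house x := by
  have h1 : ‖z‖₊ ∈ (conjugates x).map (fun z => ‖z‖₊) := Multiset.mem_map_of_mem _ hz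
  have h2 : ‖z‖₊ ≤ ((conjugates x).map (fun z => ‖z‖₊)).sup := Multiset.le_sup h1
  calc ‖z‖ = (‖z‖₊ : ℝ) := rfl
  _ ≤ _ := NNReal.coe_le_coe.2 h2

lemma mem_conjugates_of_aeval {x z : ℂ} (hx : IsAlgebraic ℚ x)
    (hz : aeval z (minpoly ℚ x) = 0) : z ∈ conjugates x := by
  have h0 : (minpoly ℚ x).map (algebraMap ℚ ℂ) ≠ 0 := by
    refine map_ne_zero ?_
    exact minpoly.ne_zero hx.isIntegral
  rw [conjugates, mem_roots h0, IsRoot, eval_map, ← aeval_def]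
  exact hz

/-- aux: product of abs over multiset bounded by h^card -/
lemma prod_abs_le_pow (s : Multiset ℂ) (h : ℝ) (hh : 0 ≤ h)
    (hb : ∀ z ∈ s, ‖z‖ ≤ h) :
    (s.map (fun z => ‖z‖)).prod ≤ h ^ Multiset.card s := by
  induction s using Multiset.induction with
  | empty => simp
  | cons a s ih =>
      simp only [Multiset.map_cons, Multiset.prod_cons, Multiset.card_cons]
      have h1 : ‖a‖ ≤ h := hb a (Multiset.mem_cons_self a s)
      have h2 := ih (fun z hz => hb z (Multiset.mem_cons_of_mem hz))
      have h3 : (0:ℝ) ≤ (s.map (fun z => ‖z‖)).prod := by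
        apply Multiset.prod_nonneg
        intro y hy
        obtain ⟨z, _, rfl⟩ := Multiset.mem_map.1 hy
        exact norm_nonneg z
      have h4 : ‖a‖ * (Multiset.map (fun z => ‖z‖) s).prod
          ≤ h * h ^ Multiset.card s := mul_le_mul h1 h2 h3 hh
      rw [pow_succ]
      linarith [h4]

lemma one_le_house {x : ℂ} (hx0 : x ≠ 0) (hxi : IsIntegral ℤ x) : 1 ≤ house x := by
  have hxa : IsIntegral ℚ x := hxi.tower_top
  have hmono : (minpoly ℚ x).Monic := minpoly.monic hxa
  set P : Polynomial ℂ := (minpoly ℚ x).map (algebraMap ℚ ℂ) with hP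
  have hPm : P.Monic := hmono.map _
  have hsplit : P.Splits := IsAlgClosed.splits _
  have hcard : Multiset.card P.roots = P.natDegree := by
    have := (hsplit.natDegree_eq_card_roots).symm
    simpa using this
  have hprod : P.coeff 0 = (-1) ^ P.natDegree * P.roots.prod :=
    hsplit.coeff_zero_eq_prod_roots_of_monic hPm
  -- coeff 0 is an integer of abs ≥ 1
  have heq : minpoly ℚ x = (minpoly ℤ x).map (algebraMap ℤ ℚ) :=
    minpoly.isIntegrallyClosed_eq_field_fractions ℚ ℂ hxi
  have hc0q : (minpoly ℚ x).coeff 0 ≠ 0 := minpoly.coeff_zero_ne_zero hxa hx0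
  have hc0 : (minpoly ℤ x).coeff 0 ≠ 0 := by
    intro h
    apply hc0q
    rw [heq, coeff_map, h, map_zero]
  have habs : (1:ℝ) ≤ ‖P.coeff 0‖ := by
    have : P.coeff 0 = ((minpoly ℤ x).coeff 0 : ℂ) := by
      rw [hP, heq, Polynomial.map_map, coeff_map]
      norm_num
    rw [this]
    rw [Complex.norm_intCast]
    have : (1:ℤ) ≤ |(minpoly ℤ x).coeff 0| := Int.one_le_abs hc0
    exact_mod_cast this
  have hnd : 1 ≤ P.natDegree := by
    rw [hP, natDegree_map]
    exact minpoly.natDegree_pos hxa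
  have hhouse0 : 0 ≤ house x := by
    rw [house]; positivity
  by_contra hlt
  push_neg at hlt
  have hb : ∀ z ∈ P.roots, ‖z‖ ≤ house x := by
    intro z hz
    exact abs_le_house (by rw [conjugates, ← hP]; exact hz)
  have h1 : (P.roots.map (fun z => ‖z‖)).prod ≤ house x ^ Multiset.card P.roots :=
    prod_abs_le_pow _ _ hhouse0 hb
  have h2 : ‖P.roots.prod‖ = (P.roots.map (fun z => ‖z‖)).prod := by
    exact map_multiset_prod ((normHom : ℂ →*₀ ℝ).toMonoidHom) _
  have h3 : (1:ℝ) ≤ ‖P.roots.prod‖ := by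
    have : ‖P.coeff 0‖ = ‖P.roots.prod‖ := by
      rw [hprod, norm_mul, norm_pow, norm_neg, norm_one, one_pow, one_mul]
    linarith [habs, this]
  have h4 : house x ^ Multiset.card P.roots < 1 := by
    apply pow_lt_one₀ hhouse0 hlt
    omega
  rw [h2] at h3
  linarith

open IntermediateField Module in
lemma exists_field_tower (l : List ℂ) (hint : ∀ x ∈ l, IsIntegral ℚ x) :
    ∃ K : IntermediateField ℚ ℂ, (∀ x ∈ l, x ∈ K) ∧ FiniteDimensional ℚ K ∧
      Module.finrank ℚ K ≤ (l.map (fun x => (minpoly ℚ x).natDegree)).prod := by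
  induction l with
  | nil =>
      refine ⟨⊥, by simp, ?_, ?_⟩
      · infer_instance
      · simp [IntermediateField.finrank_bot]
  | cons a t ih =>
      obtain ⟨K, hmem, hfd, hrank⟩ := ih (fun x hx => hint x (List.mem_cons_of_mem a hx))
      have ha : IsIntegral ℚ a := hint a (List.mem_cons_self)
      have haK : IsIntegral K a := ha.tower_top
      haveI := hfd
      haveI : FiniteDimensional K K⟮a⟯ := IntermediateField.adjoin.finiteDimensional haK
      refine ⟨(K⟮a⟯).restrictScalars ℚ, ?_, ?_, ?_⟩
      · intro x hx
        rw [List.mem_cons] at hx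
        rw [IntermediateField.mem_restrictScalars]
        rcases hx with rfl | hx
        · exact IntermediateField.mem_adjoin_simple_self K x
        · have hxK : x ∈ K := hmem x hx
          have : algebraMap K ℂ ⟨x, hxK⟩ ∈ K⟮a⟯ := IntermediateField.algebraMap_mem _ _
          simpa using this
      · change FiniteDimensional ℚ K⟮a⟯
        exact FiniteDimensional.trans ℚ K K⟮a⟯
      · have h1 : finrank ℚ (K⟮a⟯.restrictScalars ℚ) = finrank ℚ K⟮a⟯ := rfl
        have h2 : finrank ℚ K * finrank K K⟮a⟯ = finrank ℚ K⟮a⟯ :=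
          Module.finrank_mul_finrank ℚ K K⟮a⟯
        have h3 : finrank K K⟮a⟯ = (minpoly K a).natDegree :=
          IntermediateField.adjoin.finrank haK
        have h4 : (minpoly K a).natDegree ≤ (minpoly ℚ a).natDegree := by
          have hdvd : minpoly K a ∣ (minpoly ℚ a).map (algebraMap ℚ K) :=
            minpoly.dvd_map_of_isScalarTower ℚ K a
          have hne : (minpoly ℚ a).map (algebraMap ℚ K) ≠ 0 :=
            Polynomial.map_ne_zero (minpoly.ne_zero ha)
          have := Polynomial.natDegree_le_of_dvd hdvd hne
          simpa [Polynomial.natDegree_map] using this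
        rw [h1, ← h2]
        simp only [List.map_cons, List.prod_cons]
        calc finrank ℚ K * finrank K K⟮a⟯
            ≤ ((t.map (fun x => (minpoly ℚ x).natDegree)).prod) * (minpoly ℚ a).natDegree := by
              apply Nat.mul_le_mul hrank
              rw [h3]; exact h4
        _ = (minpoly ℚ a).natDegree * (t.map (fun x => (minpoly ℚ x).natDegree)).prod := by ring

-- list helpers
lemma list_one_le_prod {ι : Type*} (l : List ι) (f : ι → ℝ)
    (h : ∀ i ∈ l, 1 ≤ f i) : 1 ≤ (l.map f).prod := by
  induction l with
  | nil => simp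
  | cons a t ih =>
      simp only [List.map_cons, List.prod_cons]
      have h1 := h a (List.mem_cons_self)
      have h2 := ih (fun i hi => h i (List.mem_cons_of_mem a hi))
      nlinarith
lemma list_prod_le_prod {ι : Type*} (l : List ι) (f g : ι → ℝ)
    (h0 : ∀ i ∈ l, 0 ≤ f i) (hg : ∀ i ∈ l, 0 ≤ g i) (h : ∀ i ∈ l, f i ≤ g i) :
    (l.map f).prod ≤ (l.map g).prod := by
  induction l with
  | nil => simp
  | cons a t ih =>
      simp only [List.map_cons, List.prod_cons]
      have hfa := h0 a (List.mem_cons_self)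
      have hga := hg a (List.mem_cons_self)
      have hfg := h a (List.mem_cons_self)
      have ihe := ih (fun i hi => h0 i (List.mem_cons_of_mem a hi))
        (fun i hi => hg i (List.mem_cons_of_mem a hi))
        (fun i hi => h i (List.mem_cons_of_mem a hi))
      have hfp : 0 ≤ (t.map f).prod := by
        apply List.prod_nonneg
        intro y hy
        obtain ⟨z, hz, rfl⟩ := List.mem_map.1 hy
        exact h0 z (List.mem_cons_of_mem a hz)
      exact mul_le_mul hfg ihe hfp hga
lemma list_prod_le_pow (l : List ℕ) (d : ℕ) (h : ∀ i ∈ l, i ≤ d) :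
    l.prod ≤ d ^ l.length := by
  induction l with
  | nil => simp
  | cons a t ih =>
      simp only [List.prod_cons, List.length_cons, pow_succ]
      have := ih (fun i hi => h i (List.mem_cons_of_mem a hi))
      calc a * t.prod ≤ d * d ^ t.length :=
        Nat.mul_le_mul (h a (List.mem_cons_self)) this
      _ = d ^ t.length * d := by ring
-- multiset helpers
lemma multiset_one_le_prod (s : Multiset ℝ) (h : ∀ x ∈ s, 1 ≤ x) : 1 ≤ s.prod := by
  induction s using Multiset.induction with
  | empty => simp
  | cons a t ih =>
      simp only [Multiset.prod_cons]
      have h1 := h a (Multiset.mem_cons_self a t)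
      have h2 := ih (fun x hx => h x (Multiset.mem_cons_of_mem hx))
      nlinarith
lemma multiset_prod_map_le (s : Multiset ℂ) (f g : ℂ → ℝ)
    (h0 : ∀ z ∈ s, 0 ≤ f z) (hg : ∀ z ∈ s, 0 ≤ g z) (h : ∀ z ∈ s, f z ≤ g z) :
    (s.map f).prod ≤ (s.map g).prod := by
  induction s using Multiset.induction with
  | empty => simp
  | cons a t ih =>
      simp only [Multiset.map_cons, Multiset.prod_cons]
      have hfp : 0 ≤ (t.map f).prod := by
        apply Multiset.prod_nonneg
        intro y hy
        obtain ⟨z, hz, rfl⟩ := Multiset.mem_map.1 hy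
        exact h0 z (Multiset.mem_cons_of_mem hz)
      exact mul_le_mul (h a (Multiset.mem_cons_self a t))
        (ih (fun z hz => h0 z (Multiset.mem_cons_of_mem hz))
          (fun z hz => hg z (Multiset.mem_cons_of_mem hz))
          (fun z hz => h z (Multiset.mem_cons_of_mem hz)))
        hfp (hg a (Multiset.mem_cons_self a t))


lemma aeval_of_mem_conjugates {x z : ℂ} (hz : z ∈ conjugates x) :
    aeval z (minpoly ℚ x) = 0 := by
  rw [conjugates] at hz
  have := (mem_roots'.1 hz).2
  rwa [IsRoot, eval_map, ← aeval_def] at this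

lemma mahlerM_eq_conj {x : ℂ} (hx : IsAlgebraic ℚ x) :
    mahlerM x = ((|(intMinPoly x).leadingCoeff| : ℤ) : ℝ) *
      ((conjugates x).map (fun z => max 1 (‖z‖))).prod := by
  rw [mahlerM, intMinPoly_roots hx]

lemma one_le_mahlerM {x : ℂ} (hx : IsAlgebraic ℚ x) : 1 ≤ mahlerM x := by
  rw [mahlerM]
  have h1 : (1:ℝ) ≤ ((|(intMinPoly x).leadingCoeff| : ℤ) : ℝ) := by
    have : (1:ℤ) ≤ |(intMinPoly x).leadingCoeff| := Int.one_le_abs intMinPoly_leadingCoeff_ne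
    exact_mod_cast this
  have h2 : (1:ℝ) ≤ ((((intMinPoly x).map (algebraMap ℤ ℂ)).roots).map
      (fun z => max 1 (‖z‖))).prod := by
    apply multiset_one_le_prod
    intro y hy
    obtain ⟨z, _, rfl⟩ := Multiset.mem_map.1 hy
    exact le_max_left _ _
  nlinarith

lemma one_le_weilHeight {x : ℂ} (hx : IsAlgebraic ℚ x) : 1 ≤ weilHeight x :=
  Real.one_le_rpow (one_le_mahlerM hx) (by positivity)

lemma weilHeight_pow {x : ℂ} (hx : IsAlgebraic ℚ x) (n : ℕ) :
    (weilHeight x) ^ ((minpoly ℚ x).natDegree * n) = (mahlerM x) ^ n := by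
  have hr : 0 < (minpoly ℚ x).natDegree := minpoly.natDegree_pos hx.isIntegral
  have hM0 : (0:ℝ) ≤ mahlerM x := le_trans zero_le_one (one_le_mahlerM hx)
  have h1 : ((1:ℝ)/((minpoly ℚ x).natDegree : ℝ)) * (((minpoly ℚ x).natDegree * n : ℕ) : ℝ)
      = (n : ℝ) := by
    have : ((minpoly ℚ x).natDegree : ℝ) ≠ 0 := Nat.cast_ne_zero.2 (by omega)
    push_cast
    field_simp
  calc (weilHeight x) ^ ((minpoly ℚ x).natDegree * n)
      = (mahlerM x ^ ((1:ℝ)/((minpoly ℚ x).natDegree : ℝ)))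
          ^ ((((minpoly ℚ x).natDegree * n : ℕ)) : ℝ) := by
        rw [weilHeight, Real.rpow_natCast]
  _ = mahlerM x ^ (((1:ℝ)/((minpoly ℚ x).natDegree : ℝ)) *
        (((minpoly ℚ x).natDegree * n : ℕ) : ℝ)) := (Real.rpow_mul hM0 _ _).symm
  _ = mahlerM x ^ ((n:ℕ) : ℝ) := by rw [h1]
  _ = (mahlerM x) ^ n := Real.rpow_natCast _ _

set_option maxHeartbeats 2000000 in
open IntermediateField Module in
theorem cf_liouville_estimate (d D : ℕ) (α : ℂ) (hα : IsAlgebraic ℚ α)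
    (hD : (minpoly ℚ α).natDegree ≤ D) (l : List ℂ) (hl : l ≠ [])
    (h1 : ∀ x ∈ l, x ≠ 0 ∧ IsIntegral ℤ x ∧ (minpoly ℚ x).natDegree ≤ d)
    (h2 : ∀ t ∈ l.tails, t ≠ [] → cfVal t ≠ 0)
    (hne : α ≠ cfVal l) (hnc : minpoly ℚ α ≠ minpoly ℚ (cfVal l)) :
    1 ≤ ‖α - cfVal l‖ *
      ((2 : ℝ) ^ (2 * l.length - 1) * weilHeight α * (l.map house).prod) ^
        (D * d ^ l.length) := by
  classical
  have hN1 : 1 ≤ l.length := List.length_pos_iff.2 hl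
  have hαi : IsIntegral ℚ α := hα.isIntegral
  have hr1 : 1 ≤ (minpoly ℚ α).natDegree := minpoly.natDegree_pos hαi
  set N := l.length with hNdef
  set r := (minpoly ℚ α).natDegree with hrdef
  have hentQ : ∀ x ∈ l, IsIntegral ℚ x := fun x hx => ((h1 x hx).2.1).tower_top
  obtain ⟨K, hKmem, hfd, hKrank⟩ := exists_field_tower l hentQ
  haveI := hfd
  haveI : IsScalarTower ℤ K ℂ := IsScalarTower.of_algebraMap_eq fun z => by
    simp [algebraMap_int_eq, map_intCast]
  set n := finrank ℚ K with hndef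
  have hn1 : 0 < n := finrank_pos
  have hnd : n ≤ d ^ N := by
    refine le_trans hKrank ?_
    calc (l.map (fun x => (minpoly ℚ x).natDegree)).prod
        ≤ d ^ (l.map (fun x => (minpoly ℚ x).natDegree)).length := by
          apply list_prod_le_pow
          intro i hi
          obtain ⟨x, hx, rfl⟩ := List.mem_map.1 hi
          exact (h1 x hx).2.2
    _ = d ^ N := by simp [hNdef]
  -- the list inside K
  set l' : List K := l.attach.map (fun x => (⟨x.1, hKmem x.1 x.2⟩ : K)) with hl'def
  have hmapl : l'.map (algebraMap K ℂ) = l := by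
    rw [hl'def, List.map_map]
    have h : (algebraMap K ℂ) ∘ (fun x : {x // x ∈ l} => (⟨x.1, hKmem x.1 x.2⟩ : K))
        = fun x : {x // x ∈ l} => x.1 := rfl
    rw [h]
    exact List.attach_map_subtype_val l
  have hl'len : l'.length = N := by simp [hl'def, hNdef]
  have hmem' : ∀ x' ∈ l', algebraMap K ℂ x' ∈ l := by
    intro x' h
    rw [← hmapl]
    exact List.mem_map_of_mem h
  set p : K := (cfPQ l').1 with hpdef
  set q : K := (cfPQ l').2 with hqdef
  set pc : ℂ := algebraMap K ℂ p with hpcdef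
  set qc : ℂ := algebraMap K ℂ q with hqcdef
  have hcfpq : cfPQ l = (pc, qc) := by
    rw [← hmapl, cfPQ_map (algebraMap K ℂ)]
  obtain ⟨hqc0', hval'⟩ := cfVal_eq l h2
  have hqc : qc ≠ 0 := by rw [hcfpq] at hqc0'; exact hqc0'
  have hval : cfVal l = pc / qc := by rw [hcfpq] at hval'; exact hval'
  have hq0 : q ≠ 0 := fun h => hqc (by rw [hqcdef, h, map_zero])
  -- house bounds for embeddings
  set PP : ℝ := (l.map house).prod with hPPdef
  have hPP1 : 1 ≤ PP := by
    apply list_one_le_prod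
    intro x hx
    exact one_le_house (h1 x hx).1 (h1 x hx).2.1
  set Creal : ℝ := 2 ^ (N - 1) * PP with hCdef
  have hC1 : (1:ℝ) ≤ Creal := by
    have : (1:ℝ) ≤ 2 ^ (N-1) := one_le_pow₀ (by norm_num)
    nlinarith
  have hC0 : (0:ℝ) ≤ Creal := by linarith
  have hconj : ∀ (σ : K →ₐ[ℚ] ℂ) (x' : K), x' ∈ l' →
      ‖σ x'‖ ≤ house (algebraMap K ℂ x') ∧
      1 ≤ house (algebraMap K ℂ x') := by
    intro σ x' hx'
    have hxl : algebraMap K ℂ x' ∈ l := hmem' x' hx'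
    refine ⟨?_, one_le_house (h1 _ hxl).1 (h1 _ hxl).2.1⟩
    apply abs_le_house
    apply mem_conjugates_of_aeval ((h1 _ hxl).2.1.tower_top.isAlgebraic)
    have hmp : minpoly ℚ (algebraMap K ℂ x') = minpoly ℚ x' :=
      minpoly.algebraMap_eq (algebraMap K ℂ).injective x'
    rw [hmp, Polynomial.aeval_algHom_apply σ x' (minpoly ℚ x'), minpoly.aeval, map_zero]
  have hσpq : ∀ σ : K →ₐ[ℚ] ℂ, ‖σ p‖ ≤ Creal ∧ ‖σ q‖ ≤ Creal := by
    intro σ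
    have hmapσ : cfPQ (l'.map ⇑σ) = (σ p, σ q) := by
      have h := cfPQ_map (σ : K →+* ℂ) l'
      simpa using h
    have hb := cfPQ_bound (l'.map ⇑σ)
    rw [hmapσ] at hb
    have hlen : (l'.map ⇑σ).length = N := by simp [hl'len]
    have hple : ((l'.map ⇑σ).map (fun x => max 1 (‖x‖))).prod ≤ PP := by
      have e1 : ((l'.map ⇑σ).map (fun x => max 1 (‖x‖)))
          = l'.map (fun x' => max 1 (‖σ x'‖)) := by
        rw [List.map_map]; rfl
      have e2 : (l.map house) = l'.map (fun x' => house (algebraMap K ℂ x')) := by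
        conv_lhs => rw [← hmapl]
        rw [List.map_map]; rfl
      rw [hPPdef, e1, e2]
      apply list_prod_le_prod
      · intro x' _
        exact le_trans zero_le_one (le_max_left _ _)
      · intro x' hx'
        exact le_trans zero_le_one (hconj σ x' hx').2
      · intro x' hx'
        exact max_le (hconj σ x' hx').2 (hconj σ x' hx').1
    have hpow0 : (0:ℝ) ≤ 2 ^ ((l'.map ⇑σ).length - 1) := by positivity
    have hpow : (2:ℝ) ^ ((l'.map ⇑σ).length - 1) = 2 ^ (N - 1) := by rw [hlen]
    constructor
    · refine hb.1.trans ?_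
      rw [hCdef, ← hpow]
      exact mul_le_mul_of_nonneg_left hple hpow0
    · refine hb.2.trans ?_
      rw [hCdef, ← hpow]
      exact mul_le_mul_of_nonneg_left hple hpow0
  -- the auxiliary algebraic integer γ
  set γ : K := ∑ k ∈ Finset.range (r + 1),
      algebraMap ℤ K ((intMinPoly α).coeff k) * p ^ k * q ^ (r - k) with hγdef
  have hσγ : ∀ σ : K →ₐ[ℚ] ℂ, σ γ =
      (((intMinPoly α).leadingCoeff : ℤ) : ℂ) *
        ((conjugates α).map (fun z => σ p - z * σ q)).prod := by
    intro σ
    have hσq : σ q ≠ 0 := fun h => hq0 (by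
      apply RingHom.injective (σ : K →+* ℂ)
      simpa using h)
    rw [hγdef, map_sum]
    have hterm : ∀ k ∈ Finset.range (r + 1),
        σ (algebraMap ℤ K ((intMinPoly α).coeff k) * p ^ k * q ^ (r - k))
          = (((intMinPoly α).coeff k : ℤ) : ℂ) * (σ p) ^ k * (σ q) ^ (r - k) := by
      intro k _
      rw [map_mul, map_mul, map_pow, map_pow]
      congr 1
      congr 1
      rw [algebraMap_int_eq]
      simp [map_intCast]
    rw [Finset.sum_congr rfl hterm]
    exact homog_eval hα (σ p) (σ q) hσq
  -- γ is nonzero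
  have hfac : ∀ z ∈ conjugates α, pc - z * qc ≠ 0 := by
    intro z hz h0
    have hz2 : z = cfVal l := by
      rw [hval, eq_div_iff hqc]
      rw [sub_eq_zero] at h0
      linear_combination -h0
    apply hnc
    have haev : aeval (cfVal l) (minpoly ℚ α) = 0 := by
      rw [← hz2]; exact aeval_of_mem_conjugates hz
    have hint : IsIntegral ℚ (cfVal l) :=
      ⟨minpoly ℚ α, minpoly.monic hαi, by rwa [← aeval_def]⟩
    have hdvd : minpoly ℚ (cfVal l) ∣ minpoly ℚ α := minpoly.dvd ℚ _ haev
    have hassoc : Associated (minpoly ℚ (cfVal l)) (minpoly ℚ α) :=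
      (minpoly.irreducible hint).associated_of_dvd (minpoly.irreducible hαi) hdvd
    exact (Polynomial.eq_of_monic_of_associated (minpoly.monic hint)
      (minpoly.monic hαi) hassoc).symm
  set σ₀ : K →ₐ[ℚ] ℂ := K.val with hσ₀def
  have hσ₀app : ∀ y : K, σ₀ y = algebraMap K ℂ y := fun y => rfl
  have hσ₀γ : σ₀ γ = (((intMinPoly α).leadingCoeff : ℤ) : ℂ) *
      ((conjugates α).map (fun z => pc - z * qc)).prod := by
    rw [hσγ σ₀]
    congr 1
  have hγ0 : γ ≠ 0 := by
    intro h
    have h0 : σ₀ γ = 0 := by rw [h, map_zero]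
    rw [hσ₀γ] at h0
    rcases mul_eq_zero.1 h0 with h | h
    · exact (Int.cast_ne_zero.2 intMinPoly_leadingCoeff_ne) h
    · obtain ⟨z, hz, hz0⟩ := Multiset.mem_map.1 (Multiset.prod_eq_zero_iff.1 h)
      exact hfac z hz hz0
  -- integrality of p, q, γ
  have hpqint : IsIntegral ℤ p ∧ IsIntegral ℤ q := by
    apply cfPQ_integral
    intro x' hx'
    exact (isIntegral_algebraMap_iff (algebraMap K ℂ).injective).1 (h1 _ (hmem' x' hx')).2.1
  have hγint : IsIntegral ℤ γ := by
    rw [hγdef]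
    apply IsIntegral.sum
    intro k _
    exact ((isIntegral_algebraMap).mul (hpqint.1.pow k)).mul (hpqint.2.pow (r - k))
  set T : ℚ := Algebra.norm ℚ γ with hTdef
  have hTembed : algebraMap ℚ ℂ T = ∏ σ : K →ₐ[ℚ] ℂ, σ γ :=
    Algebra.norm_eq_prod_embeddings ℚ ℂ γ
  have hT0 : T ≠ 0 := by
    rw [hTdef, Ne, Algebra.norm_eq_zero_iff]
    exact hγ0
  have hTint : IsIntegral ℤ T := by
    rw [← isIntegral_algebraMap_iff (algebraMap ℚ ℂ).injective, hTembed]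
    apply IsIntegral.prod
    intro σ _
    exact hγint.map (σ.toRingHom.toIntAlgHom)
  obtain ⟨m, hm⟩ := IsIntegrallyClosed.isIntegral_iff.1 hTint
  have hm0 : m ≠ 0 := by
    rintro rfl
    apply hT0
    rw [← hm]
    simp
  have hT1 : (1:ℝ) ≤ ‖algebraMap ℚ ℂ T‖ := by
    rw [← hm]
    have he : algebraMap ℚ ℂ (algebraMap ℤ ℚ m) = (m : ℂ) := by
      rw [← IsScalarTower.algebraMap_apply ℤ ℚ ℂ]
      simp [algebraMap_int_eq]
    rw [he, Complex.norm_intCast]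
    have : (1:ℤ) ≤ |m| := Int.one_le_abs hm0
    calc (1:ℝ) ≤ |(m:ℤ)| := by exact_mod_cast this
    _ = |(m:ℝ)| := by rw [Int.cast_abs]
  have habs : ‖algebraMap ℚ ℂ T‖ = ∏ σ : K →ₐ[ℚ] ℂ, ‖σ γ‖ := by
    rw [hTembed]
    exact map_prod (normHom : ℂ →*₀ ℝ).toMonoidHom _ _
  -- per-embedding bounds
  set aR : ℝ := ((|(intMinPoly α).leadingCoeff| : ℤ) : ℝ) with haRdef
  have haR0 : (0:ℝ) ≤ aR := by rw [haRdef]; exact_mod_cast abs_nonneg _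
  have habsa : ‖(((intMinPoly α).leadingCoeff : ℤ) : ℂ)‖ = aR := by
    rw [Complex.norm_intCast, haRdef, Int.cast_abs]
  set Mprod : ℝ := ((conjugates α).map (fun z => max 1 (‖z‖))).prod with hMproddef
  have hMeq : mahlerM α = aR * Mprod := mahlerM_eq_conj hα
  set E : ℝ := (2*Creal)^r * mahlerM α with hEdef
  have hcardc : Multiset.card (conjugates α) = r := conjugates_card hα
  have habssub : ∀ x y : ℂ, ‖x - y‖ ≤ ‖x‖ + ‖y‖ := by
    intro x y
    simpa [sub_eq_add_neg] using norm_add_le x (-y)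
  have hptwise : ∀ (u v : ℂ), ‖u‖ ≤ Creal → ‖v‖ ≤ Creal →
      ∀ z : ℂ, ‖u - z * v‖ ≤ 2*Creal*max 1 (‖z‖) := by
    intro u v hu hv z
    have h1' := habssub u (z * v)
    rw [norm_mul] at h1'
    have hz1 : (1:ℝ) ≤ max 1 (‖z‖) := le_max_left _ _
    have hz2 : ‖z‖ ≤ max 1 (‖z‖) := le_max_right _ _
    nlinarith [norm_nonneg z, norm_nonneg v]
  have hconstprod : ∀ s : Multiset ℂ,
      (s.map (fun z => 2*Creal*max 1 (‖z‖))).prod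
        = (2*Creal) ^ Multiset.card s * (s.map (fun z => max 1 (‖z‖))).prod := by
    intro s
    have h := Multiset.prod_map_mul (m := s) (f := fun _ : ℂ => 2*Creal)
      (g := fun z : ℂ => max 1 (‖z‖))
    rw [h, Multiset.map_const', Multiset.prod_replicate]
  have herase0 : ∀ (s : Multiset ℂ) (f : ℂ → ℝ), (∀ z ∈ s, 0 ≤ f z) → 0 ≤ (s.map f).prod := by
    intro s f hf
    apply Multiset.prod_nonneg
    intro y hy
    obtain ⟨z, hz, rfl⟩ := Multiset.mem_map.1 hy
    exact hf z hz
  have hσbound : ∀ σ : K →ₐ[ℚ] ℂ, ‖σ γ‖ ≤ E := by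
    intro σ
    rw [hσγ σ, norm_mul, habsa]
    have hprodabs : ‖((conjugates α).map (fun z => σ p - z * σ q)).prod‖
        = (((conjugates α).map (fun z => σ p - z * σ q)).map (fun z => ‖z‖)).prod :=
      map_multiset_prod (normHom : ℂ →*₀ ℝ).toMonoidHom _
    rw [hprodabs, Multiset.map_map]
    have hb : ((conjugates α).map (fun z => ‖σ p - z * σ q‖)).prod
        ≤ ((conjugates α).map (fun z => 2*Creal*max 1 (‖z‖))).prod := by
      apply multiset_prod_map_le
      · intro z _; exact norm_nonneg _
      · intro z _; positivity
      · intro z _; exact hptwise (σ p) (σ q) (hσpq σ).1 (hσpq σ).2 z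
    have hb2 : ((conjugates α).map (fun z => 2*Creal*max 1 (‖z‖))).prod
        = (2*Creal)^r * Mprod := by rw [hconstprod, hcardc, hMproddef]
    calc aR * ((conjugates α).map (fun z => ‖(fun z => σ p - z * σ q) z‖)).prod
        ≤ aR * ((2*Creal)^r * Mprod) := by
          refine mul_le_mul_of_nonneg_left ?_ haR0
          rw [← hb2]; exact hb
    _ = E := by rw [hEdef, hMeq]; ring
  have hσ₀bound : ‖σ₀ γ‖ ≤ ‖α - cfVal l‖ * E := by
    rw [hσ₀γ, norm_mul, habsa]
    have hprodabs : ‖((conjugates α).map (fun z => pc - z * qc)).prod‖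
        = (((conjugates α).map (fun z => pc - z * qc)).map (fun z => ‖z‖)).prod :=
      map_multiset_prod (normHom : ℂ →*₀ ℝ).toMonoidHom _
    rw [hprodabs, Multiset.map_map]
    have hmemα : α ∈ conjugates α := mem_conjugates_self hα
    have hqcC : ‖qc‖ ≤ Creal := by
      have := (hσpq σ₀).2
      rwa [hσ₀app q] at this
    have hgα : ‖pc - α * qc‖ ≤ Creal * ‖α - cfVal l‖ := by
      have hpcq : pc - α * qc = qc * (cfVal l - α) := by
        rw [hval]
        field_simp
      rw [hpcq, norm_mul, norm_sub_rev]
      exact mul_le_mul_of_nonneg_right hqcC (norm_nonneg _)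
    have hsplit : ((conjugates α).map (fun z => ‖(fun z => pc - z * qc) z‖)).prod
        = ‖pc - α * qc‖ *
          (((conjugates α).erase α).map (fun z => ‖pc - z * qc‖)).prod := by
      conv_lhs => rw [← Multiset.cons_erase hmemα]
      rw [Multiset.map_cons, Multiset.prod_cons]
    have he : (((conjugates α).erase α).map (fun z => ‖pc - z * qc‖)).prod
        ≤ (((conjugates α).erase α).map (fun z => 2*Creal*max 1 (‖z‖))).prod := by
      apply multiset_prod_map_le
      · intro z _; exact norm_nonneg _
      · intro z _; positivity
      · intro z _
        have h0 : ‖pc‖ ≤ Creal := by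
          have := (hσpq σ₀).1; rwa [hσ₀app p] at this
        exact hptwise pc qc h0 hqcC z
    have hfull : (2*Creal*max 1 (‖α‖)) *
        (((conjugates α).erase α).map (fun z => 2*Creal*max 1 (‖z‖))).prod
          = (2*Creal)^r * Mprod := by
      have h := hconstprod (conjugates α)
      conv_lhs at h => rw [← Multiset.cons_erase hmemα]
      rw [Multiset.map_cons, Multiset.prod_cons] at h
      rw [h, hcardc, hMproddef]
    have hCle : Creal ≤ 2*Creal*max 1 (‖α‖) := by
      have h1' : (1:ℝ) ≤ max 1 (‖α‖) := le_max_left _ _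
      nlinarith
    have he0 : 0 ≤ (((conjugates α).erase α).map (fun z => ‖pc - z * qc‖)).prod :=
      herase0 _ _ (fun z _ => norm_nonneg _)
    have he0' : 0 ≤ (((conjugates α).erase α).map (fun z => 2*Creal*max 1 (‖z‖))).prod :=
      herase0 _ _ (fun z _ => by positivity)
    have habs0 : (0:ℝ) ≤ ‖α - cfVal l‖ := norm_nonneg _
    calc aR * ((conjugates α).map (fun z => ‖(fun z => pc - z * qc) z‖)).prod
        = aR * (‖pc - α * qc‖ *
            (((conjugates α).erase α).map (fun z => ‖pc - z * qc‖)).prod) := by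
          rw [hsplit]
    _ ≤ aR * ((Creal * ‖α - cfVal l‖) *
            (((conjugates α).erase α).map (fun z => 2*Creal*max 1 (‖z‖))).prod) := by
          refine mul_le_mul_of_nonneg_left (mul_le_mul hgα he he0 (by positivity)) haR0
    _ ≤ aR * ((2*Creal*max 1 (‖α‖) * ‖α - cfVal l‖) *
            (((conjugates α).erase α).map (fun z => 2*Creal*max 1 (‖z‖))).prod) := by
          refine mul_le_mul_of_nonneg_left ?_ haR0
          refine mul_le_mul_of_nonneg_right ?_ he0'
          exact mul_le_mul_of_nonneg_right hCle habs0
    _ = ‖α - cfVal l‖ * (aR * ((2*Creal)^r * Mprod)) := by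
          rw [← hfull]; ring
    _ = ‖α - cfVal l‖ * E := by rw [hEdef, hMeq]; ring
  -- assemble the product over embeddings
  have hcardσ : Fintype.card (K →ₐ[ℚ] ℂ) = n := AlgHom.card ℚ K ℂ
  have hE0 : (0:ℝ) ≤ E := by
    rw [hEdef]
    have := one_le_mahlerM hα
    positivity
  have hprodle : (∏ σ : K →ₐ[ℚ] ℂ, ‖σ γ‖)
      ≤ (‖α - cfVal l‖ * E) * E ^ (n - 1) := by
    rw [← Finset.mul_prod_erase Finset.univ _ (Finset.mem_univ σ₀)]
    have h2' : (∏ σ ∈ Finset.univ.erase σ₀, ‖σ γ‖)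
        ≤ ∏ _σ ∈ Finset.univ.erase σ₀, E :=
      Finset.prod_le_prod (fun _ _ => norm_nonneg _) (fun σ _ => hσbound σ)
    have h3' : (∏ _σ ∈ Finset.univ.erase σ₀, E) = E ^ (n - 1) := by
      rw [Finset.prod_const, Finset.card_erase_of_mem (Finset.mem_univ σ₀),
        Finset.card_univ, hcardσ]
    refine mul_le_mul hσ₀bound (h2'.trans h3'.le) ?_ ?_
    · exact Finset.prod_nonneg (fun _ _ => norm_nonneg _)
    · exact mul_nonneg (norm_nonneg _) hE0
  have hkey : 1 ≤ ‖α - cfVal l‖ * E ^ n := by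
    have e1 : (‖α - cfVal l‖ * E) * E ^ (n - 1)
        = ‖α - cfVal l‖ * E ^ n := by
      have hEn' : E ^ n = E * E ^ (n - 1) := by
        rw [← pow_succ']
        congr 1
        omega
      rw [hEn']; ring
    calc (1:ℝ) ≤ ‖algebraMap ℚ ℂ T‖ := hT1
    _ = ∏ σ : K →ₐ[ℚ] ℂ, ‖σ γ‖ := habs
    _ ≤ (‖α - cfVal l‖ * E) * E ^ (n - 1) := hprodle
    _ = _ := e1
  -- numeric comparison
  have hH1 : 1 ≤ weilHeight α := one_le_weilHeight hα
  have hEnle : E ^ n ≤ ((2:ℝ) ^ (2*N - 1) * weilHeight α * PP) ^ (D * d ^ N) := by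
    have h2C : 2*Creal = 2^N * PP := by
      rw [hCdef, ← mul_assoc]
      congr 1
      rw [← pow_succ']
      congr 1
      omega
    have hw := weilHeight_pow hα n
    have hEe : E ^ n = ((2:ℝ)^N * weilHeight α * PP) ^ (r * n) := by
      calc E ^ n = ((2*Creal)^r * mahlerM α)^n := by rw [hEdef]
      _ = (2*Creal)^(r*n) * mahlerM α ^ n := by rw [mul_pow, ← pow_mul]
      _ = ((2:ℝ)^N*PP)^(r*n) * weilHeight α ^(r*n) := by rw [h2C, ← hw]
      _ = ((2:ℝ)^N * weilHeight α * PP)^(r*n) := by rw [mul_pow, mul_pow, mul_pow]; ring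
    rw [hEe]
    have h2N : (1:ℝ) ≤ (2:ℝ)^N := one_le_pow₀ one_le_two
    have hbase1 : (1:ℝ) ≤ (2:ℝ)^N * weilHeight α * PP := by nlinarith
    have h2' : (2:ℝ)^N ≤ 2^(2*N-1) := pow_le_pow_right₀ one_le_two (by omega)
    have hbase2 : (2:ℝ)^N * weilHeight α * PP ≤ 2^(2*N-1) * weilHeight α * PP := by
      refine mul_le_mul_of_nonneg_right ?_ (by linarith)
      exact mul_le_mul_of_nonneg_right h2' (by linarith)
    have hbase3 : (1:ℝ) ≤ (2:ℝ)^(2*N-1) * weilHeight α * PP := le_trans hbase1 hbase2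
    calc ((2:ℝ)^N * weilHeight α * PP)^(r*n)
        ≤ ((2:ℝ)^(2*N-1) * weilHeight α * PP)^(r*n) := by
          apply pow_le_pow_left₀ (by linarith) hbase2
    _ ≤ ((2:ℝ)^(2*N-1) * weilHeight α * PP)^(D * d ^ N) := by
          apply pow_le_pow_right₀ hbase3
          exact Nat.mul_le_mul hD hnd
  calc (1:ℝ) ≤ ‖α - cfVal l‖ * E ^ n := hkey
  _ ≤ ‖α - cfVal l‖ * ((2:ℝ) ^ (2*N - 1) * weilHeight α * PP) ^ (D * d ^ N) :=
      mul_le_mul_of_nonneg_left hEnle (norm_nonneg _)
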